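/- Let A be a bounded measurable subset of ℝ^d with finite positive Lebesgue measure μ(A) and diameter diam(A), and let S be a bounded subset of ℝ^m with diameter diam(S). Let g : ℝ^d → ℝ^m be a measurable map with g(A) ⊆ S, and let F : ℝ^m × ℝ^d → ℝ satisfy |F(s, a) − F(s, a')| ≤ L‖a − a'‖ and |F(s, a) − F(s', a)| ≤ L‖s − s'‖ for all s, s' ∈ S and a, a' ∈ A. Let a_1, …, a_K be independent random variables, each uniformly distributed on A. Then for every t > 0, the probability that |(μ(A)/K) · Σ_{k=1}^K F(g(a_k), a_k) − ∫_A F(g(a), a) da| ≥ t is at most 2·exp(−K t² / (2 (L · μ(A) · (diam(A) + diam(S)))²)). -/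

import Mathlib

open MeasureTheory ProbabilityTheory Real


lemma exp_mul_le_cosh_add {D s x : ℝ} (hD : 0 < D) (hx : |x| ≤ D) :
    exp (s * x) ≤ cosh (s * D) + x * (sinh (s * D) / D) := by
  have h1 : -D ≤ x := (abs_le.mp hx).1
  have h2 : x ≤ D := (abs_le.mp hx).2
  have key := convexOn_exp.2 (Set.mem_univ (-(s*D))) (Set.mem_univ (s*D))
    (by apply div_nonneg <;> linarith : (0:ℝ) ≤ (D - x)/(2*D))
    (by apply div_nonneg <;> linarith : (0:ℝ) ≤ (D + x)/(2*D))
    (by field_simp; ring : (D - x)/(2*D) + (D + x)/(2*D) = 1)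
  simp only [smul_eq_mul] at key
  have harg : (D - x)/(2*D) * (-(s*D)) + (D + x)/(2*D) * (s*D) = s * x := by
    field_simp; ring
  rw [harg] at key
  refine key.trans (le_of_eq ?_)
  rw [Real.cosh_eq, Real.sinh_eq]
  field_simp
  ring

lemma mgf_le_of_bound {Ω : Type*} [MeasurableSpace Ω] {μ : Measure Ω}
    [IsProbabilityMeasure μ] {Z : Ω → ℝ} {D : ℝ} (hD : 0 < D)
    (hZm : Measurable Z) (hbd : ∀ᵐ ω ∂μ, |Z ω| ≤ D) (hmean : ∫ ω, Z ω ∂μ = 0)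
    (s : ℝ) : mgf Z μ s ≤ exp (s ^ 2 * D ^ 2 / 2) := by
  have hZint : Integrable Z μ := by
    refine Integrable.mono' (integrable_const D) hZm.aestronglyMeasurable ?_
    filter_upwards [hbd] with ω h using by simpa using h
  have hexpint : Integrable (fun ω => exp (s * Z ω)) μ := by
    refine Integrable.mono' (integrable_const (exp (|s| * D)))
      ((hZm.const_mul s).exp.aestronglyMeasurable) ?_
    filter_upwards [hbd] with ω h
    rw [Real.norm_eq_abs, abs_exp]
    exact Real.exp_le_exp.mpr <|
      (le_abs_self _).trans <| (abs_mul s (Z ω)).le.trans <|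
        mul_le_mul_of_nonneg_left h (abs_nonneg s)
  have hmono : mgf Z μ s ≤ ∫ ω, (cosh (s * D) + Z ω * (sinh (s * D) / D)) ∂μ := by
    refine integral_mono_ae hexpint ?_ ?_
    · exact (integrable_const _).add (hZint.mul_const _)
    · filter_upwards [hbd] with ω h using exp_mul_le_cosh_add hD h
  have hint : ∫ ω, (cosh (s * D) + Z ω * (sinh (s * D) / D)) ∂μ = cosh (s * D) := by
    rw [integral_add (integrable_const _) (hZint.mul_const _), integral_const,
      integral_mul_const, hmean]
    simp
  rw [hint] at hmono
  refine hmono.trans ((Real.cosh_le_exp_half_sq _).trans (le_of_eq ?_))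
  congr 1
  ring

lemma integrable_exp_mul_of_bound {Ω : Type*} [MeasurableSpace Ω] {μ : Measure Ω}
    [IsProbabilityMeasure μ] {Z : Ω → ℝ} {D : ℝ}
    (hZm : Measurable Z) (hbd : ∀ᵐ ω ∂μ, |Z ω| ≤ D) (s : ℝ) :
    Integrable (fun ω => exp (s * Z ω)) μ := by
  refine Integrable.mono' (integrable_const (exp (|s| * D)))
    ((hZm.const_mul s).exp.aestronglyMeasurable) ?_
  filter_upwards [hbd] with ω h
  rw [Real.norm_eq_abs, abs_exp]
  exact Real.exp_le_exp.mpr <|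
    (le_abs_self _).trans <| (abs_mul s (Z ω)).le.trans <|
      mul_le_mul_of_nonneg_left h (abs_nonneg s)

lemma sum_tail_bound {Ω : Type*} [MeasureSpace Ω] [IsProbabilityMeasure (ℙ : Measure Ω)]
    {K : ℕ} (hK : 0 < K) (Z : Fin K → Ω → ℝ)
    (hindep : iIndepFun Z ℙ)
    (hm : ∀ k, Measurable (Z k)) {D : ℝ} (hD : 0 < D)
    (hbd : ∀ k, ∀ᵐ ω ∂(ℙ : Measure Ω), |Z k ω| ≤ D)
    (hmean : ∀ k, ∫ ω, Z k ω ∂(ℙ : Measure Ω) = 0)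
    {ε : ℝ} (hε : 0 < ε) :
    (ℙ {ω | ε ≤ ∑ k, Z k ω}).toReal ≤ exp (-ε ^ 2 / (2 * K * D ^ 2)) := by
  set s : ℝ := ε / (K * D ^ 2) with hs_def
  have hKR : (0:ℝ) < K := Nat.cast_pos.mpr hK
  have hs : 0 ≤ s := le_of_lt (by positivity)
  have hint : ∀ k, Integrable (fun ω => exp (s * Z k ω)) ℙ := fun k =>
    integrable_exp_mul_of_bound (hm k) (hbd k) s
  have hint_sum : Integrable (fun ω => exp (s * (∑ k, Z k) ω)) ℙ :=
    hindep.integrable_exp_mul_sum hm (fun k _ => hint k)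
  have hset : {ω | ε ≤ ∑ k, Z k ω} = {ω | ε ≤ (∑ k, Z k) ω} := by
    simp [Finset.sum_apply]
  have hcher := measure_ge_le_exp_mul_mgf (X := ∑ k, Z k) (μ := ℙ) ε hs hint_sum
  rw [← hset] at hcher
  have hmgf : mgf (∑ k, Z k) ℙ s ≤ exp (K * (s ^ 2 * D ^ 2 / 2)) := by
    rw [hindep.mgf_sum hm]
    calc ∏ k, mgf (Z k) ℙ s ≤ ∏ k : Fin K, exp (s ^ 2 * D ^ 2 / 2) :=
          Finset.prod_le_prod (fun k _ => mgf_nonneg)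
            (fun k _ => mgf_le_of_bound hD (hm k) (hbd k) (hmean k) s)
      _ = exp (K * (s ^ 2 * D ^ 2 / 2)) := by
          rw [Finset.prod_const, ← Real.exp_nat_mul]; simp
  refine hcher.trans ?_
  calc exp (-s * ε) * mgf (∑ k, Z k) ℙ s
      ≤ exp (-s * ε) * exp (K * (s ^ 2 * D ^ 2 / 2)) := by
        exact mul_le_mul_of_nonneg_left hmgf (le_of_lt (exp_pos _))
    _ = exp (-ε ^ 2 / (2 * K * D ^ 2)) := by
        rw [← Real.exp_add]
        congr 1
        rw [hs_def]
        field_simp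
        ring

/-- Theorem 2 of the paper, second inequality (Monte Carlo error bound for the
continuous inflows): with `g` the true parent map taking values in the bounded
state space `S`, and `F` `L`-Lipschitz separately in the state and action
arguments, for i.i.d. uniform samples `a 1, …, a K` from `A` and every `t > 0`,
`ℙ(|(μ(A)/K) • Σ F(g(a k), a k) − ∫_A F(g(a), a) da| ≥ t)
  ≤ 2 exp(−K t² / (2 (L μ(A) (diam A + diam S))²))`. -/
theorem cflownets_inflow_concentration {d m : ℕ}
    (A : Set (EuclideanSpace ℝ (Fin d)))
    (hAmeas : MeasurableSet A) (hAbdd : Bornology.IsBounded A)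
    (hApos : 0 < volume A) (hAfin : volume A < ⊤)
    (S : Set (EuclideanSpace ℝ (Fin m))) (hSbdd : Bornology.IsBounded S)
    (g : EuclideanSpace ℝ (Fin d) → EuclideanSpace ℝ (Fin m))
    (hg : Measurable g) (hgA : ∀ a ∈ A, g a ∈ S)
    (F : EuclideanSpace ℝ (Fin m) → EuclideanSpace ℝ (Fin d) → ℝ) (L : ℝ)
    (hLipA : ∀ s ∈ S, ∀ a ∈ A, ∀ a' ∈ A, |F s a - F s a'| ≤ L * ‖a - a'‖)
    (hLipS : ∀ s ∈ S, ∀ s' ∈ S, ∀ a ∈ A, |F s a - F s' a| ≤ L * ‖s - s'‖)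
    {Ω : Type*} [MeasureSpace Ω] [IsProbabilityMeasure (ℙ : Measure Ω)]
    (K : ℕ) (hK : 0 < K)
    (a : Fin K → Ω → EuclideanSpace ℝ (Fin d))
    (hmeas : ∀ k, Measurable (a k))
    (hindep : iIndepFun a ℙ)
    (hunif : ∀ k, Measure.map (a k) ℙ = (volume A)⁻¹ • volume.restrict A)
    (t : ℝ) (ht : 0 < t) :
    (ℙ {ω | t ≤ |((volume A).toReal / K) * ∑ k, F (g (a k ω)) (a k ω)
        - ∫ x in A, F (g x) x|}).toReal ≤
      2 * exp (-(K * t ^ 2) /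
        (2 * (L * (volume A).toReal * (Metric.diam A + Metric.diam S)) ^ 2)) := by
  classical
  -- basic facts
  set μA : ℝ := (volume A).toReal with hμA_def
  have hμA : 0 < μA := ENNReal.toReal_pos hApos.ne' hAfin.ne
  have hKR : (0:ℝ) < K := Nat.cast_pos.mpr hK
  obtain ⟨x₀, hx₀⟩ : A.Nonempty := nonempty_of_measure_ne_zero hApos.ne'
  -- samples are a.s. in A
  have hae_mem : ∀ᵐ ω ∂(ℙ : Measure Ω), ∀ k, a k ω ∈ A := by
    rw [ae_all_iff]
    intro k
    have h0 : ℙ (a k ⁻¹' Aᶜ) = 0 := by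
      rw [← Measure.map_apply (hmeas k) hAmeas.compl, hunif k]
      rw [Measure.smul_apply, Measure.restrict_apply hAmeas.compl]
      simp
    exact (ae_iff).2 h0
  -- degenerate case: A is a singleton
  by_cases hsing : ∃ x₁ ∈ A, x₁ ≠ x₀
  swap
  · push_neg at hsing
    have hAeq : A = {x₀} := Set.eq_singleton_iff_unique_mem.2 ⟨hx₀, hsing⟩
    have hzero : ℙ {ω | t ≤ |(μA / K) * ∑ k, F (g (a k ω)) (a k ω)
        - ∫ x in A, F (g x) x|} = 0 := by
      rw [measure_eq_zero_iff_ae_notMem]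
      filter_upwards [hae_mem] with ω hω hE

      have hval : ∀ k : Fin K, F (g (a k ω)) (a k ω) = F (g x₀) x₀ := by
        intro k
        have := hω k
        rw [hAeq, Set.mem_singleton_iff] at this
        rw [this]
      have hInt : ∫ x in A, F (g x) x = μA * F (g x₀) x₀ := by
        rw [hAeq]
        rw [setIntegral_congr_fun (by simp) (fun x hx => by
          rw [Set.mem_singleton_iff] at hx; rw [hx] : Set.EqOn (fun x => F (g x) x)
            (fun _ => F (g x₀) x₀) ({x₀} : Set _))]
        rw [setIntegral_const, measureReal_def]
        rw [hμA_def, hAeq]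
        simp [smul_eq_mul]
      rw [Finset.sum_congr rfl (fun k _ => hval k), Finset.sum_const, hInt] at hE
      simp only [Finset.card_univ, Fintype.card_fin, nsmul_eq_mul] at hE
      rw [div_mul_eq_mul_div, mul_comm (μA) ((K:ℝ) * F (g x₀) x₀)] at hE
      have : (K:ℝ) * F (g x₀) x₀ * μA / K - μA * F (g x₀) x₀ = 0 := by
        field_simp; ring
      rw [this, abs_zero] at hE
      exact absurd hE (not_le.mpr ht)
    rw [hzero]
    simp only [ENNReal.toReal_zero]
    positivity
  obtain ⟨x₁, hx₁, hne⟩ := hsing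
  -- L is nonnegative
  have hL : 0 ≤ L := by
    by_contra hneg
    push_neg at hneg
    have hb := hLipA (g x₀) (hgA x₀ hx₀) x₁ hx₁ x₀ hx₀
    have hnorm : 0 < ‖x₁ - x₀‖ := by
      rw [norm_pos_iff]; exact sub_ne_zero.mpr hne
    nlinarith [abs_nonneg (F (g x₀) x₁ - F (g x₀) x₀)]
  set D : ℝ := L * (Metric.diam A + Metric.diam S) with hD_def
  have hD0 : 0 ≤ D := by
    have := Metric.diam_nonneg (s := A); have := Metric.diam_nonneg (s := S); positivity
  -- oscillation bound
  have hosc : ∀ x ∈ A, ∀ y ∈ A, |F (g x) x - F (g y) y| ≤ D := by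
    intro x hx y hy
    have h1 : |F (g x) x - F (g x) y| ≤ L * ‖x - y‖ := hLipA _ (hgA x hx) x hx y hy
    have h2 : |F (g x) y - F (g y) y| ≤ L * ‖g x - g y‖ := hLipS _ (hgA x hx) _ (hgA y hy) y hy
    have hd1 : ‖x - y‖ ≤ Metric.diam A := by
      rw [← dist_eq_norm]; exact Metric.dist_le_diam_of_mem hAbdd hx hy
    have hd2 : ‖g x - g y‖ ≤ Metric.diam S := by
      rw [← dist_eq_norm]; exact Metric.dist_le_diam_of_mem hSbdd (hgA x hx) (hgA y hy)
    calc |F (g x) x - F (g y) y|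
        ≤ |F (g x) x - F (g x) y| + |F (g x) y - F (g y) y| := abs_sub_le _ _ _
      _ ≤ L * Metric.diam A + L * Metric.diam S := by
          gcongr <;> [exact h1.trans (by gcongr); exact h2.trans (by gcongr)]
      _ = D := by rw [hD_def]; ring
  -- trivial case D = 0
  rcases eq_or_lt_of_le hD0 with hDeq | hD
  · have hden : (2 * (L * μA * (Metric.diam A + Metric.diam S)) ^ 2) = 0 := by
      have h : L * μA * (Metric.diam A + Metric.diam S) = μA * D := by rw [hD_def]; ring
      rw [h, ← hDeq]; ring
    rw [hden, div_zero, Real.exp_zero, mul_one]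
    have h1 := ENNReal.toReal_mono ENNReal.one_ne_top
      (prob_le_one (μ := (ℙ : Measure Ω)) (s := {ω | t ≤ |(μA / K) * ∑ k, F (g (a k ω)) (a k ω)
        - ∫ x in A, F (g x) x|}))
    simp only [ENNReal.toReal_one] at h1
    linarith
  -- main case: D > 0
  -- measurable extension of x ↦ F (g x) x
  set b : ℝ := F (g x₀) x₀ with hb_def
  have hFsub_lip : LipschitzWith (Real.toNNReal (2 * L))
      (fun p : {s // s ∈ S} × {x // x ∈ A} => F p.1.1 p.2.1) := by
    refine LipschitzWith.of_dist_le_mul fun p q => ?_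
    rw [Real.dist_eq, Prod.dist_eq]
    have h1 : |F p.1.1 p.2.1 - F p.1.1 q.2.1| ≤ L * dist p.2.1 q.2.1 := by
      rw [dist_eq_norm]; exact hLipA _ p.1.2 _ p.2.2 _ q.2.2
    have h2 : |F p.1.1 q.2.1 - F q.1.1 q.2.1| ≤ L * dist p.1.1 q.1.1 := by
      rw [dist_eq_norm]; exact hLipS _ p.1.2 _ q.1.2 _ q.2.2
    have hc2 : dist p.2.1 q.2.1 = dist p.2 q.2 := (Subtype.dist_eq _ _).symm
    have hc1 : dist p.1.1 q.1.1 = dist p.1 q.1 := (Subtype.dist_eq _ _).symm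
    rw [hc2] at h1; rw [hc1] at h2
    have hm1 : dist p.2 q.2 ≤ max (dist p.1 q.1) (dist p.2 q.2) := le_max_right _ _
    have hm2 : dist p.1 q.1 ≤ max (dist p.1 q.1) (dist p.2 q.2) := le_max_left _ _
    have habs := abs_sub_le (F p.1.1 p.2.1) (F p.1.1 q.2.1) (F q.1.1 q.2.1)
    have hdnn : (0:ℝ) ≤ max (dist p.1 q.1) (dist p.2 q.2) :=
      le_trans dist_nonneg hm2
    have hLc : (Real.toNNReal (2 * L) : ℝ) = 2 * L := Real.coe_toNNReal _ (by linarith)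
    rw [hLc]
    nlinarith [mul_le_mul_of_nonneg_left hm1 hL, mul_le_mul_of_nonneg_left hm2 hL]
  have hφmeas : Measurable (fun x : {x // x ∈ A} =>
      ((⟨g x.1, hgA _ x.2⟩ : {s // s ∈ S}), x)) :=
    Measurable.prodMk ((hg.comp measurable_subtype_coe).subtype_mk) measurable_id
  have he_meas : Measurable (fun x : {x // x ∈ A} => F (g x.1) x.1) :=
    (hFsub_lip.continuous.measurable).comp hφmeas
  set hfun : EuclideanSpace ℝ (Fin d) → ℝ :=
    fun x => if hx : x ∈ A then F (g x) x else b with hfun_def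
  have hhfun : Measurable hfun := by
    exact Measurable.dite he_meas measurable_const hAmeas
  have hfun_eq : ∀ x ∈ A, hfun x = F (g x) x := fun x hx => dif_pos hx
  have hfun_ran : ∀ x, ∃ y ∈ A, hfun x = F (g y) y := by
    intro x
    by_cases hx : x ∈ A
    · exact ⟨x, hx, hfun_eq x hx⟩
    · exact ⟨x₀, hx₀, dif_neg hx⟩
  have hfun_bd : ∀ x, |hfun x| ≤ |b| + D := by
    intro x
    obtain ⟨y, hy, hxy⟩ := hfun_ran x
    have := hosc y hy x₀ hx₀
    rw [hxy]
    rw [hb_def]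
    have habs := abs_sub_abs_le_abs_sub (F (g y) y) (F (g x₀) x₀)
    linarith [abs_sub_comm (F (g y) y) (F (g x₀) x₀) ▸ this]
  set I : ℝ := ∫ x in A, F (g x) x with hI_def
  set c : ℝ := I / μA with hc_def
  have hμc : μA * c = I := by rw [hc_def]; field_simp
  -- integrability on A
  have hIntOn_h : IntegrableOn hfun A volume := by
    refine Integrable.mono'
      ((integrableOn_const hAfin.ne) : IntegrableOn (fun _ => |b| + D) A volume)
      hhfun.aestronglyMeasurable.restrict ?_
    exact Filter.Eventually.of_forall fun x => hfun_bd x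
  have hIntOn_F : IntegrableOn (fun y => F (g y) y) A volume :=
    hIntOn_h.congr_fun hfun_eq hAmeas
  have hIA : ∫ x in A, hfun x = I := by
    rw [hI_def]
    exact setIntegral_congr_fun hAmeas hfun_eq
  -- deviation bound on A
  have hdev : ∀ x ∈ A, |hfun x - c| ≤ D := by
    intro x hx
    have e1 : μA * hfun x - I = ∫ y in A, (hfun x - F (g y) y) := by
      rw [integral_sub
        ((integrableOn_const hAfin.ne) : IntegrableOn (fun _ => hfun x) A volume)
        hIntOn_F, setIntegral_const, measureReal_def,
        hI_def, hμA_def, smul_eq_mul]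
    have e2 : |∫ y in A, (hfun x - F (g y) y)| ≤ D * μA := by
      have hb2 : ∀ᵐ y ∂(volume.restrict A), ‖hfun x - F (g y) y‖ ≤ D := by
        refine (ae_restrict_iff' hAmeas).2 (Filter.Eventually.of_forall fun y hy => ?_)
        rw [Real.norm_eq_abs, hfun_eq x hx]
        exact hosc x hx y hy
      have := norm_integral_le_of_norm_le
        ((integrableOn_const hAfin.ne) : IntegrableOn (fun _ => D) A volume) hb2
      rw [Real.norm_eq_abs] at this
      refine this.trans ?_
      rw [setIntegral_const, measureReal_def, hμA_def, smul_eq_mul]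
      ring_nf
      exact le_of_eq (by ring)
    have h3 : hfun x - c = (μA * hfun x - I) / μA := by
      rw [hc_def]; field_simp
    rw [h3, abs_div, abs_of_pos hμA, div_le_iff₀ hμA, e1]
    exact e2
  -- the centered random variables
  set fZ : EuclideanSpace ℝ (Fin d) → ℝ := fun x => hfun x - c with hfZ_def
  have hfZm : Measurable fZ := hhfun.sub measurable_const
  have hZm : ∀ k, Measurable (fun ω => fZ (a k ω)) := fun k => hfZm.comp (hmeas k)
  have hindepZ : iIndepFun (fun k => fun ω => fZ (a k ω)) ℙ :=
    hindep.comp (fun _ => fZ) (fun _ => hfZm)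
  have hbdZ : ∀ k, ∀ᵐ ω ∂(ℙ : Measure Ω), |fZ (a k ω)| ≤ D := by
    intro k
    filter_upwards [hae_mem] with ω hω using hdev _ (hω k)
  have hintZ : ∀ k, Integrable (fun ω => hfun (a k ω)) (ℙ : Measure Ω) := by
    intro k
    refine Integrable.mono' (integrable_const (|b| + D))
      (hhfun.comp (hmeas k)).aestronglyMeasurable ?_
    exact Filter.Eventually.of_forall fun ω => hfun_bd _
  have hmeanZ : ∀ k, ∫ ω, fZ (a k ω) ∂(ℙ : Measure Ω) = 0 := by
    intro k
    have h1 : ∫ ω, hfun (a k ω) ∂(ℙ : Measure Ω) = μA⁻¹ * I := by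
      rw [← integral_map (hmeas k).aemeasurable hhfun.aestronglyMeasurable, hunif k,
        integral_smul_measure, ENNReal.toReal_inv, hIA, smul_eq_mul, hμA_def]
    have : (fun ω => fZ (a k ω)) = fun ω => hfun (a k ω) - c := rfl
    rw [this, integral_sub (hintZ k) (integrable_const c), h1, integral_const]
    simp only [measure_univ, probReal_univ, ENNReal.toReal_one, smul_eq_mul, one_mul]
    rw [hc_def]
    field_simp
    simp
  -- tail bounds
  set ε : ℝ := t * K / μA with hε_def
  have hε : 0 < ε := by positivity
  have hT1 := sum_tail_bound hK (fun k => fun ω => fZ (a k ω)) hindepZ hZm hD hbdZ hmeanZ hε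
  have hindepZ' : iIndepFun (fun k => fun ω => -fZ (a k ω)) ℙ :=
    hindep.comp (fun _ => fun x => -fZ x) (fun _ => hfZm.neg)
  have hT2 := sum_tail_bound hK (fun k => fun ω => -fZ (a k ω)) hindepZ'
    (fun k => (hZm k).neg) hD
    (fun k => by filter_upwards [hbdZ k] with ω h using by rwa [abs_neg])
    (fun k => by rw [integral_neg, hmeanZ k, neg_zero]) hε
  -- event inclusion
  set S1 : Set Ω := {ω | ε ≤ ∑ k, fZ (a k ω)} with hS1_def
  set S2 : Set Ω := {ω | ε ≤ ∑ k, -fZ (a k ω)} with hS2_def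
  set E : Set Ω := {ω | t ≤ |μA / K * ∑ k, F (g (a k ω)) (a k ω) - I|} with hE_def
  have hle : E ≤ᵐ[(ℙ : Measure Ω)] ((S1 ∪ S2 : Set Ω)) := by
    filter_upwards [hae_mem] with ω hω
    intro hEω
    have hEω' : t ≤ |μA / K * ∑ k, F (g (a k ω)) (a k ω) - I| := hEω
    have hsum : ∑ k, F (g (a k ω)) (a k ω) = ∑ k, hfun (a k ω) :=
      Finset.sum_congr rfl fun k _ => (hfun_eq _ (hω k)).symm
    have hZsum : ∑ k, fZ (a k ω) = (∑ k, hfun (a k ω)) - K * c := by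
      rw [hfZ_def]
      rw [Finset.sum_sub_distrib, Finset.sum_const, Finset.card_univ, Fintype.card_fin,
        nsmul_eq_mul]
    have hkey : μA / K * ∑ k, F (g (a k ω)) (a k ω) - I
        = μA / K * ∑ k, fZ (a k ω) := by
      rw [hsum, hZsum, ← hμc]
      field_simp
    rw [hkey] at hEω'
    rw [abs_mul, abs_of_pos (by positivity : (0:ℝ) < μA / K)] at hEω'
    have hεle : ε ≤ |∑ k, fZ (a k ω)| := by
      rw [hε_def, div_le_iff₀ hμA]
      rw [div_mul_eq_mul_div, le_div_iff₀ hKR] at hEω'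
      nlinarith [abs_nonneg (∑ k, fZ (a k ω))]
    rcases le_abs.mp hεle with h | h
    · exact Set.mem_union_left _ h
    · refine Set.mem_union_right _ ?_
      show ε ≤ ∑ k, -fZ (a k ω)
      rw [← Finset.sum_neg_distrib] at h
      exact h
  -- put everything together
  have hfinal : (ℙ E).toReal ≤ 2 * exp (-ε ^ 2 / (2 * K * D ^ 2)) := by
    calc (ℙ E).toReal ≤ (ℙ (S1 ∪ S2)).toReal :=
          ENNReal.toReal_mono (measure_ne_top _ _) (measure_mono_ae hle)
      _ ≤ (ℙ S1 + ℙ S2).toReal :=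
          ENNReal.toReal_mono
            (ENNReal.add_ne_top.2 ⟨measure_ne_top _ _, measure_ne_top _ _⟩)
            (measure_union_le _ _)
      _ = (ℙ S1).toReal + (ℙ S2).toReal :=
          ENNReal.toReal_add (measure_ne_top _ _) (measure_ne_top _ _)
      _ ≤ exp (-ε ^ 2 / (2 * K * D ^ 2)) + exp (-ε ^ 2 / (2 * K * D ^ 2)) :=
          add_le_add hT1 hT2
      _ = 2 * exp (-ε ^ 2 / (2 * K * D ^ 2)) := by ring
  have hexp_eq : -ε ^ 2 / (2 * K * D ^ 2)
      = -(K * t ^ 2) / (2 * (L * μA * (Metric.diam A + Metric.diam S)) ^ 2) := by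
    have hrw : L * μA * (Metric.diam A + Metric.diam S) = μA * D := by
      rw [hD_def]; ring
    rw [hrw, hε_def]
    field_simp
  rw [← hexp_eq]
  exact hfinal
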